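/- For every affine permutation w in the affine symmetric group S̃_n, the cost of w is at least half of its total displacement: $(w) ≥ tvd(w)/2. -/

import Mathlib

/-- An affine permutation in the affine symmetric group `S̃_n`: a bijection `w : ℤ → ℤ`
with `w(i + n) = w(i) + n` for all `i` and `∑_{i=1}^n w(i) = ∑_{i=1}^n i`. -/
def IsAffinePerm (n : ℕ) (w : Equiv.Perm ℤ) : Prop :=
  (∀ i : ℤ, w (i + n) = w i + n) ∧
  (∑ i ∈ Finset.Icc (1 : ℤ) (n : ℤ), w i) = ∑ i ∈ Finset.Icc (1 : ℤ) (n : ℤ), i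

/-- Total displacement: `tvd(w) = ∑_{i=1}^n |w(i) − i|`. -/
noncomputable def tvdAffA (n : ℕ) (w : Equiv.Perm ℤ) : ℕ :=
  ∑ i ∈ Finset.Icc (1 : ℤ) (n : ℤ), (w i - i).natAbs

/-- `t` is a transposition `⟨(x y)⟩` of `S̃_n` of cost `c`: for some `x < y` with
`x ≢ y (mod n)`, `t` exchanges `x + kn` and `y + kn` for every `k ∈ ℤ` and fixes
all other integers, and `c = y − x`. -/
def IsAffATransp (n : ℕ) (t : Equiv.Perm ℤ) (c : ℕ) : Prop :=
  ∃ x y : ℤ, x < y ∧ ¬ ((n : ℤ) ∣ (y - x)) ∧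
    (∀ k : ℤ, t (x + k * n) = y + k * n) ∧
    (∀ k : ℤ, t (y + k * n) = x + k * n) ∧
    (∀ z : ℤ, (∀ k : ℤ, z ≠ x + k * n ∧ z ≠ y + k * n) → t z = z) ∧
    (c : ℤ) = y - x

namespace AffineCostProof

/-- Periodicity of a function on ℤ. -/
def Per (n : ℕ) (f : ℤ → ℤ) : Prop := ∀ i : ℤ, f (i + (n : ℤ)) = f i + (n : ℤ)

lemma per_shift {n : ℕ} {f : ℤ → ℤ} (hf : Per n f) : ∀ (k i : ℤ), f (i + k * (n : ℤ)) = f i + k * (n : ℤ) := by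
  intro k
  induction k using Int.induction_on with
  | zero => simp
  | succ k ih =>
      intro i
      have h1 : i + ((k : ℤ) + 1) * (n : ℤ) = (i + k * n) + n := by ring
      rw [h1, hf, ih]; ring
  | pred k ih =>
      intro i
      have h1 : i + (-(k : ℤ) - 1) * (n : ℤ) + (n:ℤ) = i + (-(k:ℤ)) * n := by ring
      have h2 := hf (i + (-(k : ℤ) - 1) * (n : ℤ))
      rw [h1, ih] at h2
      have h3 : (-(k:ℤ) - 1) * (n:ℤ) = (-(k:ℤ)) * n - n := by ring
      linarith [h3]

lemma per_mul {n : ℕ} {f g : Equiv.Perm ℤ} (hf : Per n ⇑f) (hg : Per n ⇑g) :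
    Per n ⇑(f * g) := by
  intro i
  simp only [Equiv.Perm.mul_apply, hg i, hf (g i)]

lemma per_one {n : ℕ} : Per n ⇑(1 : Equiv.Perm ℤ) := by intro i; simp

/-- Distinct elements of `Icc 1 n` are incongruent mod n. -/
lemma icc_residue {n : ℕ} {i j : ℤ} (hi : i ∈ Finset.Icc (1:ℤ) (n:ℤ))
    (hj : j ∈ Finset.Icc (1:ℤ) (n:ℤ)) (hd : (n:ℤ) ∣ i - j) : i = j := by
  rw [Finset.mem_Icc] at hi hj
  have h0 : i - j = 0 := by
    apply Int.eq_zero_of_abs_lt_dvd hd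
    rw [abs_lt]
    omega
  omega

/-- For a periodic bijection, positions in `Icc 1 n` with congruent values coincide. -/
lemma per_inj {n : ℕ} {w : Equiv.Perm ℤ} (hp : Per n ⇑w) {i j : ℤ}
    (hi : i ∈ Finset.Icc (1:ℤ) (n:ℤ)) (hj : j ∈ Finset.Icc (1:ℤ) (n:ℤ))
    (hd : (n:ℤ) ∣ (w i - w j)) : i = j := by
  obtain ⟨k, hk⟩ := hd
  have h1 : w (j + k * (n:ℤ)) = w i := by rw [per_shift hp]; linear_combination -hk
  have h2 : j + k * (n:ℤ) = i := w.injective h1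
  apply icc_residue hi hj
  exact ⟨k, by linear_combination h2.symm⟩

/-! ### Construction of transpositions -/

def tFun (n x y : ℤ) (z : ℤ) : ℤ :=
  if n ∣ z - x then z + (y - x) else if n ∣ z - y then z - (y - x) else z

lemma tFun_eq1 {n x y z : ℤ} (h : n ∣ z - x) : tFun n x y z = z + (y - x) := if_pos h

lemma tFun_eq2 {n x y z : ℤ} (h1 : ¬ n ∣ z - x) (h2 : n ∣ z - y) :
    tFun n x y z = z - (y - x) := by rw [tFun, if_neg h1, if_pos h2]

lemma tFun_eq3 {n x y z : ℤ} (h1 : ¬ n ∣ z - x) (h2 : ¬ n ∣ z - y) :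
    tFun n x y z = z := by rw [tFun, if_neg h1, if_neg h2]

lemma tFun_invol {n x y : ℤ} (hnd : ¬ n ∣ y - x) : Function.Involutive (tFun n x y) := by
  intro z
  by_cases h1 : n ∣ z - x
  · rw [tFun_eq1 h1]
    have h1' : ¬ n ∣ z + (y - x) - x := by
      intro hd
      apply hnd
      have e : y - x = (z + (y - x) - x) - (z - x) := by ring
      rw [e]; exact dvd_sub hd h1
    have h2' : n ∣ z + (y - x) - y := by
      have e : z + (y - x) - y = z - x := by ring
      rw [e]; exact h1
    rw [tFun_eq2 h1' h2']; ring
  · by_cases h2 : n ∣ z - y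
    · rw [tFun_eq2 h1 h2]
      have h1' : n ∣ z - (y - x) - x := by
        have e : z - (y - x) - x = z - y := by ring
        rw [e]; exact h2
      rw [tFun_eq1 h1']; ring
    · rw [tFun_eq3 h1 h2, tFun_eq3 h1 h2]

def tPerm {n x y : ℤ} (hnd : ¬ n ∣ y - x) : Equiv.Perm ℤ :=
  Function.Involutive.toPerm _ (tFun_invol hnd)

lemma tPerm_apply {n x y : ℤ} (hnd : ¬ n ∣ y - x) (z : ℤ) : tPerm hnd z = tFun n x y z := rfl

lemma tPerm_sq {n x y : ℤ} (hnd : ¬ n ∣ y - x) : tPerm hnd * tPerm hnd = 1 := by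
  apply Equiv.ext
  intro z
  simp only [Equiv.Perm.mul_apply, Equiv.Perm.one_apply, tPerm_apply]
  exact tFun_invol hnd z

lemma tPerm_left {n x y : ℤ} (hnd : ¬ n ∣ y - x) (k : ℤ) :
    tPerm hnd (x + k * n) = y + k * n := by
  rw [tPerm_apply, tFun_eq1 ⟨k, by ring⟩]; ring

lemma tPerm_right {n x y : ℤ} (hnd : ¬ n ∣ y - x) (k : ℤ) :
    tPerm hnd (y + k * n) = x + k * n := by
  have h1 : ¬ n ∣ y + k * n - x := by
    intro hd
    apply hnd
    have e : y - x = (y + k * n - x) - k * n := by ring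
    rw [e]; exact dvd_sub hd ⟨k, by ring⟩
  rw [tPerm_apply, tFun_eq2 h1 ⟨k, by ring⟩]; ring

lemma tPerm_fix {n x y : ℤ} (hnd : ¬ n ∣ y - x) {z : ℤ} (h1 : ¬ n ∣ z - x)
    (h2 : ¬ n ∣ z - y) : tPerm hnd z = z := by
  rw [tPerm_apply, tFun_eq3 h1 h2]

lemma isAffATransp_tPerm {n : ℕ} {x y : ℤ} (hxy : x < y) (hnd : ¬ (n:ℤ) ∣ y - x) :
    IsAffATransp n (tPerm hnd) ((y - x).toNat) := by
  refine ⟨x, y, hxy, hnd, tPerm_left hnd, tPerm_right hnd, ?_, ?_⟩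
  · intro z hz
    apply tPerm_fix hnd
    · rintro ⟨k, hk⟩
      exact (hz k).1 (by linear_combination hk)
    · rintro ⟨k, hk⟩
      exact (hz k).2 (by linear_combination hk)
  · rw [Int.toNat_of_nonneg (by omega)]

/-- Packaged unordered-pair transposition. -/
lemma exists_pairT {n : ℕ} {a b : ℤ} (hab : ¬ ((n:ℤ) ∣ (b - a))) :
    ∃ (t : Equiv.Perm ℤ) (c : ℕ), IsAffATransp n t c ∧ t * t = 1 ∧
      (∀ k : ℤ, t (a + k * (n:ℤ)) = b + k * (n:ℤ)) ∧
      (∀ k : ℤ, t (b + k * (n:ℤ)) = a + k * (n:ℤ)) ∧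
      (∀ z : ℤ, ¬ (n:ℤ) ∣ (z - a) → ¬ (n:ℤ) ∣ (z - b) → t z = z) := by
  have hne : a ≠ b := by rintro rfl; exact hab (by simp)
  rcases hne.lt_or_gt with h | h
  · exact ⟨tPerm hab, _, isAffATransp_tPerm h hab, tPerm_sq hab, tPerm_left hab,
      tPerm_right hab, fun z h1 h2 => tPerm_fix hab h1 h2⟩
  · have hab' : ¬ ((n:ℤ) ∣ (a - b)) := by
      intro hd; apply hab
      have e : b - a = -(a - b) := by ring
      rw [e]; exact hd.neg_right
    exact ⟨tPerm hab', _, isAffATransp_tPerm h hab', tPerm_sq hab', tPerm_right hab',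
      tPerm_left hab', fun z h1 h2 => tPerm_fix hab' h2 h1⟩

/-- Transpositions are periodic. -/
lemma per_transp {n : ℕ} {t : Equiv.Perm ℤ} {c : ℕ} (ht : IsAffATransp n t c) :
    Per n ⇑t := by
  obtain ⟨x, y, hxy, hnd, hx, hy, hfix, hc⟩ := ht
  intro z
  by_cases h1 : ∃ k : ℤ, z = x + k * n
  · obtain ⟨k, rfl⟩ := h1
    have e : x + k * (n:ℤ) + n = x + (k + 1) * n := by ring
    rw [e, hx, hx]; ring
  · by_cases h2 : ∃ k : ℤ, z = y + k * n
    · obtain ⟨k, rfl⟩ := h2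
      have e : y + k * (n:ℤ) + n = y + (k + 1) * n := by ring
      rw [e, hy, hy]; ring
    · push_neg at h1 h2
      have hz : t z = z := hfix z (fun k => ⟨h1 k, h2 k⟩)
      have hz' : t (z + n) = z + n := by
        apply hfix
        intro k
        constructor
        · intro he; exact h1 (k - 1) (by push_cast at he ⊢; linarith)
        · intro he; exact h2 (k - 1) (by push_cast at he ⊢; linarith)
      rw [hz, hz']

/-! ### The displacement bound for one transposition -/

lemma step_bound {n : ℕ} {u : Equiv.Perm ℤ} (hu : Per n ⇑u) {t : Equiv.Perm ℤ} {c : ℕ}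
    (ht : IsAffATransp n t c) :
    ∑ i ∈ Finset.Icc (1:ℤ) (n:ℤ), (t (u i) - u i).natAbs ≤ 2 * c := by
  obtain ⟨x, y, hxy, hnd, hx, hy, hfix, hc⟩ := ht
  have hval : ∀ z : ℤ, (t z - z).natAbs =
      (if (n:ℤ) ∣ z - x then c else 0) + (if (n:ℤ) ∣ z - y then c else 0) := by
    intro z
    by_cases h1 : (n:ℤ) ∣ z - x
    · have h2 : ¬ (n:ℤ) ∣ z - y := by
        intro hd
        apply hnd
        have e : y - x = (z - x) - (z - y) := by ring
        rw [e]; exact dvd_sub h1 hd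
      obtain ⟨k, hk⟩ := h1
      have hz : z = x + k * (n:ℤ) := by linear_combination hk
      rw [if_pos ⟨k, hk⟩, if_neg h2, hz, hx k]
      have e : y + k * (n:ℤ) - (x + k * n) = y - x := by ring
      rw [e, ← hc]
      simp
    · by_cases h2 : (n:ℤ) ∣ z - y
      · obtain ⟨k, hk⟩ := h2
        have hz : z = y + k * (n:ℤ) := by linear_combination hk
        rw [if_neg h1, if_pos ⟨k, hk⟩, hz, hy k]
        have e : x + k * (n:ℤ) - (y + k * n) = -(y - x) := by ring
        rw [e, ← hc]
        simp
      · rw [if_neg h1, if_neg h2]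
        have hz : t z = z := by
          apply hfix
          intro k
          constructor
          · intro he; exact h1 ⟨k, by linear_combination he⟩
          · intro he; exact h2 ⟨k, by linear_combination he⟩
        simp [hz]
  calc ∑ i ∈ Finset.Icc (1:ℤ) (n:ℤ), (t (u i) - u i).natAbs
      = ∑ i ∈ Finset.Icc (1:ℤ) (n:ℤ),
        ((if (n:ℤ) ∣ u i - x then c else 0) + (if (n:ℤ) ∣ u i - y then c else 0)) := by
        exact Finset.sum_congr rfl fun i _ => hval (u i)
    _ = (((Finset.Icc (1:ℤ) (n:ℤ)).filter (fun i => (n:ℤ) ∣ u i - x)).card * c)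
        + (((Finset.Icc (1:ℤ) (n:ℤ)).filter (fun i => (n:ℤ) ∣ u i - y)).card * c) := by
        rw [Finset.sum_add_distrib]
        congr 1
        · rw [← Finset.sum_filter, Finset.sum_const, smul_eq_mul]
        · rw [← Finset.sum_filter, Finset.sum_const, smul_eq_mul]
    _ ≤ 1 * c + 1 * c := by
        have hcard : ∀ v : ℤ,
            ((Finset.Icc (1:ℤ) (n:ℤ)).filter (fun i => (n:ℤ) ∣ u i - v)).card ≤ 1 := by
          intro v
          rw [Finset.card_le_one]
          intro i hi j hj
          rw [Finset.mem_filter] at hi hj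
          apply per_inj hu hi.1 hj.1
          have e : u i - u j = (u i - v) - (u j - v) := by ring
          rw [e]; exact dvd_sub hi.2 hj.2
        have := hcard x
        have := hcard y
        apply Nat.add_le_add <;> exact Nat.mul_le_mul_right _ (by assumption)
    _ = 2 * c := by ring

lemma per_prod {n : ℕ} (L : List (Equiv.Perm ℤ × ℕ))
    (h : ∀ p ∈ L, IsAffATransp n p.1 p.2) : Per n ⇑((L.map Prod.fst).prod) := by
  induction L with
  | nil => simpa using per_one
  | cons p L ih =>
      simp only [List.map_cons, List.prod_cons]
      exact per_mul (per_transp (h p (List.mem_cons_self)))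
        (ih fun q hq => h q (List.mem_cons_of_mem p hq))

lemma tvd_prod_le {n : ℕ} (L : List (Equiv.Perm ℤ × ℕ))
    (h : ∀ p ∈ L, IsAffATransp n p.1 p.2) :
    tvdAffA n ((L.map Prod.fst).prod) ≤ 2 * (L.map Prod.snd).sum := by
  induction L with
  | nil => simp [tvdAffA]
  | cons p L ih =>
      simp only [List.map_cons, List.prod_cons, List.sum_cons]
      set u : Equiv.Perm ℤ := (L.map Prod.fst).prod with hu
      have hup : Per n ⇑u := per_prod L fun q hq => h q (List.mem_cons_of_mem p hq)
      have htp : IsAffATransp n p.1 p.2 := h p (List.mem_cons_self)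
      calc tvdAffA n (p.1 * u)
          = ∑ i ∈ Finset.Icc (1:ℤ) (n:ℤ), (p.1 (u i) - i).natAbs := rfl
        _ ≤ ∑ i ∈ Finset.Icc (1:ℤ) (n:ℤ),
              ((p.1 (u i) - u i).natAbs + (u i - i).natAbs) := by
            apply Finset.sum_le_sum
            intro i _
            omega
        _ = (∑ i ∈ Finset.Icc (1:ℤ) (n:ℤ), (p.1 (u i) - u i).natAbs) + tvdAffA n u := by
            rw [Finset.sum_add_distrib]; rfl
        _ ≤ 2 * p.2 + 2 * (L.map Prod.snd).sum :=
            Nat.add_le_add (step_bound hup htp) (ih fun q hq => h q (List.mem_cons_of_mem p hq))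
        _ = 2 * (p.2 + (L.map Prod.snd).sum) := by ring

/-! ### Existence of factorizations -/

lemma exists_rep {n : ℕ} (hn : 0 < n) (z : ℤ) :
    ∃ i ∈ Finset.Icc (1:ℤ) (n:ℤ), ∃ k : ℤ, z = i + k * (n:ℤ) := by
  have hn' : (0:ℤ) < (n:ℤ) := by exact_mod_cast hn
  refine ⟨(z - 1) % (n:ℤ) + 1, ?_, (z - 1) / (n:ℤ), ?_⟩
  · rw [Finset.mem_Icc]
    have h1 := Int.emod_nonneg (z - 1) (by omega : (n:ℤ) ≠ 0)
    have h2 := Int.emod_lt_of_pos (z - 1) hn'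
    omega
  · have h3 := Int.mul_ediv_add_emod (z - 1) (n:ℤ)
    linear_combination -h3

lemma eq_one_of_fixed {n : ℕ} (hn : 0 < n) {w : Equiv.Perm ℤ} (hp : Per n ⇑w)
    (h : ∀ i ∈ Finset.Icc (1:ℤ) (n:ℤ), w i = i) : w = 1 := by
  apply Equiv.ext
  intro z
  obtain ⟨i, hi, k, rfl⟩ := exists_rep hn z
  rw [Equiv.Perm.one_apply, per_shift hp, h i hi]

lemma sum_two_point {s : Finset ℤ} {a b : ℤ} (ha : a ∈ s) (hb : b ∈ s) (hab : a ≠ b)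
    (p q : ℤ) :
    ∑ i ∈ s, ((if i = a then p else 0) + (if i = b then q else 0)) = p + q := by
  rw [Finset.sum_add_distrib, Finset.sum_ite_eq' s a (fun _ => p),
    Finset.sum_ite_eq' s b (fun _ => q), if_pos ha, if_pos hb]

lemma tvd_zero_iff {n : ℕ} {w : Equiv.Perm ℤ} :
    tvdAffA n w = 0 ↔ ∀ i ∈ Finset.Icc (1:ℤ) (n:ℤ), w i = i := by
  rw [tvdAffA, Finset.sum_eq_zero_iff]
  constructor
  · intro h i hi; have := h i hi; omega
  · intro h i hi; rw [h i hi]; simp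

lemma mul_cancel_invol {t v : Equiv.Perm ℤ} (h : t * t = 1) : t * (t * v) = v := by
  rw [← mul_assoc, h, one_mul]

/-- Phase 2 : factorization of class-preserving affine permutations. -/
lemma factor_classpres {n : ℕ} (hn : 0 < n) :
    ∀ m : ℕ, ∀ w : Equiv.Perm ℤ, IsAffinePerm n w →
      (∀ i ∈ Finset.Icc (1:ℤ) (n:ℤ), (n:ℤ) ∣ w i - i) → tvdAffA n w ≤ m →
      ∃ L : List (Equiv.Perm ℤ × ℕ), (∀ p ∈ L, IsAffATransp n p.1 p.2) ∧
        (L.map Prod.fst).prod = w := by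
  have hn' : (0:ℤ) < (n:ℤ) := by exact_mod_cast hn
  intro m
  induction m with
  | zero =>
      intro w hw _ htv
      have h0 : tvdAffA n w = 0 := Nat.le_zero.mp htv
      refine ⟨[], by simp, ?_⟩
      simp [eq_one_of_fixed hn hw.1 (tvd_zero_iff.mp h0)]
  | succ m ih =>
      intro w hw hdvd htv
      by_cases h0 : tvdAffA n w = 0
      · refine ⟨[], by simp, ?_⟩
        simp [eq_one_of_fixed hn hw.1 (tvd_zero_iff.mp h0)]
      · -- there are positions displaced both ways
        have hsum0 : ∑ i ∈ Finset.Icc (1:ℤ) (n:ℤ), (w i - i) = 0 := by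
          rw [Finset.sum_sub_distrib, hw.2, sub_self]
        have hex : ∃ i ∈ Finset.Icc (1:ℤ) (n:ℤ), w i - i ≠ 0 := by
          by_contra hc
          push_neg at hc
          apply h0
          rw [tvd_zero_iff]
          intro i hi
          have := hc i hi
          omega
        obtain ⟨a, haI, ha⟩ : ∃ a ∈ Finset.Icc (1:ℤ) (n:ℤ), 0 < w a - a := by
          by_contra hc
          push_neg at hc
          obtain ⟨i, hi, hne⟩ := hex
          exact hne ((Finset.sum_eq_zero_iff_of_nonpos hc).mp hsum0 i hi)
        obtain ⟨b, hbI, hb⟩ : ∃ b ∈ Finset.Icc (1:ℤ) (n:ℤ), w b - b < 0 := by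
          by_contra hc
          push_neg at hc
          obtain ⟨i, hi, hne⟩ := hex
          exact hne ((Finset.sum_eq_zero_iff_of_nonneg hc).mp hsum0 i hi)
        have hab : a ≠ b := by intro h; rw [h] at ha; omega
        have hNa : (n:ℤ) ≤ w a - a := Int.le_of_dvd ha (hdvd a haI)
        have hNb : w b - b ≤ -(n:ℤ) := by
          have h1 : (n:ℤ) ∣ b - w b := by
            have e : b - w b = -(w b - b) := by ring
            rw [e]; exact (hdvd b hbI).neg_right
          have := Int.le_of_dvd (by omega) h1
          omega
        have hvv' : ¬ (n:ℤ) ∣ (w b - w a) := fun hd => hab (per_inj hw.1 haI hbI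
          (by have e : w a - w b = -(w b - w a) := by ring
              rw [e]; exact hd.neg_right))
        obtain ⟨t₁, c₁, ht₁, ht₁sq, ht₁ab, ht₁ba, ht₁fix⟩ := exists_pairT hvv'
        have hvv2 : ¬ (n:ℤ) ∣ (w b - (w a - (n:ℤ))) := by
          intro hd
          apply hvv'
          have e : w b - w a = (w b - (w a - (n:ℤ))) - (n:ℤ) := by ring
          rw [e]; exact dvd_sub hd dvd_rfl
        obtain ⟨t₂, c₂, ht₂, ht₂sq, ht₂ab, ht₂ba, ht₂fix⟩ := exists_pairT hvv2
        set w' : Equiv.Perm ℤ := t₂ * (t₁ * w) with hw'def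
        have hW'a : w' a = w a - (n:ℤ) := by
          have e1 : t₁ (w a) = w b := by have := ht₁ab 0; simpa using this
          have e2 : t₂ (w b) = w a - (n:ℤ) := by have := ht₂ba 0; simpa using this
          simp [hw'def, Equiv.Perm.mul_apply, e1, e2]
        have hW'b : w' b = w b + (n:ℤ) := by
          have e1 : t₁ (w b) = w a := by have := ht₁ba 0; simpa using this
          have e2 : t₂ (w a) = w b + (n:ℤ) := by
            have := ht₂ab 1
            have e : w a - (n:ℤ) + 1 * (n:ℤ) = w a := by ring
            rw [e] at this
            rw [this]; ring
          simp [hw'def, Equiv.Perm.mul_apply, e1, e2]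
        have hW'o : ∀ i ∈ Finset.Icc (1:ℤ) (n:ℤ), i ≠ a → i ≠ b → w' i = w i := by
          intro i hi hia hib
          have h1 : ¬ (n:ℤ) ∣ w i - w a := fun hd => hia (per_inj hw.1 hi haI hd)
          have h2 : ¬ (n:ℤ) ∣ w i - w b := fun hd => hib (per_inj hw.1 hi hbI hd)
          have h3 : ¬ (n:ℤ) ∣ w i - (w a - (n:ℤ)) := by
            intro hd
            apply h1
            have e : w i - w a = (w i - (w a - (n:ℤ))) - (n:ℤ) := by ring
            rw [e]; exact dvd_sub hd dvd_rfl
          simp [hw'def, Equiv.Perm.mul_apply, ht₁fix _ h1 h2, ht₂fix _ h3 h2]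
        have hper' : Per n ⇑w' := per_mul (per_transp ht₂) (per_mul (per_transp ht₁) hw.1)
        have hkey : ∀ i ∈ Finset.Icc (1:ℤ) (n:ℤ),
            w' i = w i + ((if i = a then -(n:ℤ) else 0) + (if i = b then (n:ℤ) else 0)) := by
          intro i hi
          by_cases hia : i = a
          · rw [hia, if_pos rfl, if_neg hab, hW'a]; ring
          · by_cases hib : i = b
            · subst hib
              rw [if_neg hia, if_pos rfl, hW'b]; ring
            · rw [if_neg hia, if_neg hib, hW'o i hi hia hib]; ring
        have haff' : IsAffinePerm n w' := by
          refine ⟨hper', ?_⟩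
          rw [Finset.sum_congr rfl hkey, Finset.sum_add_distrib,
            sum_two_point haI hbI hab, hw.2]
          ring
        have hdvd' : ∀ i ∈ Finset.Icc (1:ℤ) (n:ℤ), (n:ℤ) ∣ w' i - i := by
          intro i hi
          by_cases hia : i = a
          · rw [hia, hW'a]
            have e : w a - (n:ℤ) - a = (w a - a) - (n:ℤ) := by ring
            rw [e]; exact dvd_sub (hdvd a haI) dvd_rfl
          · by_cases hib : i = b
            · rw [hib, hW'b]
              have e : w b + (n:ℤ) - b = (w b - b) + (n:ℤ) := by ring
              rw [e]; exact dvd_add (hdvd b hbI) dvd_rfl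
            · rw [hW'o i hi hia hib]; exact hdvd i hi
        have hlt : tvdAffA n w' < tvdAffA n w := by
          apply Finset.sum_lt_sum
          · intro i hi
            by_cases hia : i = a
            · rw [hia, hW'a]; omega
            · by_cases hib : i = b
              · rw [hib, hW'b]; omega
              · rw [hW'o i hi hia hib]
          · exact ⟨a, haI, by rw [hW'a]; omega⟩
        obtain ⟨L', hL', hprod'⟩ := ih w' haff' hdvd' (by omega)
        refine ⟨(t₁, c₁) :: (t₂, c₂) :: L', ?_, ?_⟩
        · intro p hp
          rcases List.mem_cons.mp hp with rfl | hp
          · exact ht₁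
          rcases List.mem_cons.mp hp with rfl | hp
          · exact ht₂
          · exact hL' p hp
        · simp only [List.map_cons, List.prod_cons, hprod', hw'def]
          rw [mul_cancel_invol ht₂sq, mul_cancel_invol ht₁sq]

/-- Phase 1 : factorization of arbitrary affine permutations,
by induction on the number of positions whose residue class is moved. -/
lemma factor_exists {n : ℕ} (hn : 0 < n) :
    ∀ m : ℕ, ∀ w : Equiv.Perm ℤ, IsAffinePerm n w →
      ((Finset.Icc (1:ℤ) (n:ℤ)).filter (fun i => ¬ (n:ℤ) ∣ w i - i)).card ≤ m →
      ∃ L : List (Equiv.Perm ℤ × ℕ), (∀ p ∈ L, IsAffATransp n p.1 p.2) ∧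
        (L.map Prod.fst).prod = w := by
  intro m
  induction m with
  | zero =>
      intro w hw hcard
      have hdvd : ∀ i ∈ Finset.Icc (1:ℤ) (n:ℤ), (n:ℤ) ∣ w i - i := by
        intro i hi
        by_contra hc
        have : i ∈ (Finset.Icc (1:ℤ) (n:ℤ)).filter (fun i => ¬ (n:ℤ) ∣ w i - i) :=
          Finset.mem_filter.mpr ⟨hi, hc⟩
        have := Finset.card_pos.mpr ⟨i, this⟩
        omega
      exact factor_classpres hn (tvdAffA n w) w hw hdvd le_rfl
  | succ m ih =>
      intro w hw hcard
      by_cases h0 : ((Finset.Icc (1:ℤ) (n:ℤ)).filter (fun i => ¬ (n:ℤ) ∣ w i - i)).card = 0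
      · have hdvd : ∀ i ∈ Finset.Icc (1:ℤ) (n:ℤ), (n:ℤ) ∣ w i - i := by
          intro i hi
          by_contra hc
          have : i ∈ (Finset.Icc (1:ℤ) (n:ℤ)).filter (fun i => ¬ (n:ℤ) ∣ w i - i) :=
            Finset.mem_filter.mpr ⟨hi, hc⟩
          have := Finset.card_pos.mpr ⟨i, this⟩
          omega
        exact factor_classpres hn (tvdAffA n w) w hw hdvd le_rfl
      · -- pick a bad position r
        obtain ⟨r, hr⟩ := Finset.card_pos.mp (by omega :
          0 < ((Finset.Icc (1:ℤ) (n:ℤ)).filter (fun i => ¬ (n:ℤ) ∣ w i - i)).card)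
        rw [Finset.mem_filter] at hr
        obtain ⟨hrI, hbad⟩ := hr
        -- the position i₂ whose value is in the class of r
        obtain ⟨i₂, hi₂I, k, hk⟩ := exists_rep hn (w.symm r)
        have hwi₂ : w i₂ = r + (-k) * (n:ℤ) := by
          have h1 : w (i₂ + k * (n:ℤ)) = r := by rw [← hk]; simp
          have h2 : w i₂ + k * (n:ℤ) = r := by rw [← per_shift hw.1]; exact h1
          linarith
        have hi₂r : i₂ ≠ r := by
          intro h
          apply hbad
          rw [h] at hwi₂
          exact ⟨-k, by linear_combination hwi₂⟩
        -- the transposition exchanging the classes of w r and r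
        have hnd : ¬ (n:ℤ) ∣ (r - w r) := by
          intro hd
          apply hbad
          have e : w r - r = -(r - w r) := by ring
          rw [e]; exact hd.neg_right
        obtain ⟨t, c, ht, htsq, htab, htba, htfix⟩ := exists_pairT hnd
        set w' : Equiv.Perm ℤ := t * w with hw'def
        have hW'r : w' r = r := by
          have := htab 0
          simp only [zero_mul, add_zero] at this
          simp [hw'def, Equiv.Perm.mul_apply, this]
        have hW'i₂ : w' i₂ = w r + (-k) * (n:ℤ) := by
          have h1 := htba (-k)
          simp only [hw'def, Equiv.Perm.mul_apply, hwi₂]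
          exact h1
        have hW'o : ∀ i ∈ Finset.Icc (1:ℤ) (n:ℤ), i ≠ r → i ≠ i₂ → w' i = w i := by
          intro i hi hir hii₂
          have h1 : ¬ (n:ℤ) ∣ w i - w r := fun hd => hir (per_inj hw.1 hi hrI hd)
          have h2 : ¬ (n:ℤ) ∣ w i - r := by
            intro hd
            apply hii₂
            apply per_inj hw.1 hi hi₂I
            rw [hwi₂]
            have e : w i - (r + (-k) * (n:ℤ)) = (w i - r) + k * (n:ℤ) := by ring
            rw [e]; exact dvd_add hd ⟨k, by ring⟩
          simp [hw'def, Equiv.Perm.mul_apply, htfix _ h1 h2]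
        have hper' : Per n ⇑w' := per_mul (per_transp ht) hw.1
        have hkey : ∀ i ∈ Finset.Icc (1:ℤ) (n:ℤ),
            w' i = w i + ((if i = r then r - w r else 0) + (if i = i₂ then w r - r else 0)) := by
          intro i hi
          by_cases hir : i = r
          · rw [hir, hW'r, if_pos rfl, if_neg (fun h : r = i₂ => hi₂r h.symm)]; ring
          · by_cases hii₂ : i = i₂
            · rw [hii₂, hW'i₂, if_neg (hii₂ ▸ hir : i₂ ≠ r), if_pos rfl, hwi₂]; ring
            · rw [if_neg hir, if_neg hii₂, hW'o i hi hir hii₂]; ring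
        have haff' : IsAffinePerm n w' := by
          refine ⟨hper', ?_⟩
          rw [Finset.sum_congr rfl hkey, Finset.sum_add_distrib,
            sum_two_point hrI hi₂I (fun h => hi₂r h.symm), hw.2]
          ring
        have hsubset : ((Finset.Icc (1:ℤ) (n:ℤ)).filter (fun i => ¬ (n:ℤ) ∣ w' i - i)) ⊆
            ((Finset.Icc (1:ℤ) (n:ℤ)).filter (fun i => ¬ (n:ℤ) ∣ w i - i)).erase r := by
          intro i hi
          rw [Finset.mem_filter] at hi
          obtain ⟨hiI, hbad'⟩ := hi
          have hir : i ≠ r := by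
            intro h
            apply hbad'
            rw [h, hW'r]
            simp
          rw [Finset.mem_erase, Finset.mem_filter]
          refine ⟨hir, hiI, ?_⟩
          by_cases hii₂ : i = i₂
          · -- i₂ was bad for w as well
            rw [hii₂, hwi₂]
            intro hd
            apply hir
            rw [hii₂]
            apply icc_residue hi₂I hrI
            have e : i₂ - r = -((r + (-k) * (n:ℤ)) - i₂) + (-k) * (n:ℤ) := by ring
            rw [e]; exact dvd_add hd.neg_right ⟨-k, by ring⟩
          · rw [← hW'o i hiI hir hii₂]
            exact hbad'
        have hcard' : ((Finset.Icc (1:ℤ) (n:ℤ)).filter (fun i => ¬ (n:ℤ) ∣ w' i - i)).card ≤ m := by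
          have h1 := Finset.card_le_card hsubset
          have hrmem : r ∈ (Finset.Icc (1:ℤ) (n:ℤ)).filter (fun i => ¬ (n:ℤ) ∣ w i - i) :=
            Finset.mem_filter.mpr ⟨hrI, hbad⟩
          rw [Finset.card_erase_of_mem hrmem] at h1
          omega
        obtain ⟨L', hL', hprod'⟩ := ih w' haff' hcard'
        refine ⟨(t, c) :: L', ?_, ?_⟩
        · intro p hp
          rcases List.mem_cons.mp hp with rfl | hp
          · exact ht
          · exact hL' p hp
        · simp only [List.map_cons, List.prod_cons, hprod', hw'def]
          exact mul_cancel_invol htsq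

end AffineCostProof

/-- The cost of `w ∈ S̃_n`: the minimum of `$(t₁) + ⋯ + $(t_k)` over all factorizations
`w = t₁ ⋯ t_k` into transpositions of `S̃_n`. -/
noncomputable def costAffA (n : ℕ) (w : Equiv.Perm ℤ) : ℕ :=
  sInf {c : ℕ | ∃ L : List (Equiv.Perm ℤ × ℕ),
    (∀ p ∈ L, IsAffATransp n p.1 p.2) ∧
    (L.map Prod.fst).prod = w ∧ c = (L.map Prod.snd).sum}

/-- For every affine permutation `w ∈ S̃_n`, the cost of `w` is at least half of its
total displacement: `$(w) ≥ tvd(w)/2`. -/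
theorem cost_ge_half_tvd_affineA (n : ℕ) (w : Equiv.Perm ℤ) (hw : IsAffinePerm n w) :
    tvdAffA n w ≤ 2 * costAffA n w := by
  rcases Nat.eq_zero_or_pos n with h0 | hn
  · subst h0
    have he : Finset.Icc (1:ℤ) ((0:ℕ):ℤ) = ∅ := by
      apply Finset.Icc_eq_empty
      norm_num
    simp [tvdAffA, he]
  · have hS : {c : ℕ | ∃ L : List (Equiv.Perm ℤ × ℕ),
        (∀ p ∈ L, IsAffATransp n p.1 p.2) ∧
        (L.map Prod.fst).prod = w ∧ c = (L.map Prod.snd).sum}.Nonempty := by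
      obtain ⟨L, hL, hprod⟩ := AffineCostProof.factor_exists hn
        ((Finset.Icc (1:ℤ) (n:ℤ)).filter (fun i => ¬ (n:ℤ) ∣ w i - i)).card w hw le_rfl
      exact ⟨(L.map Prod.snd).sum, L, hL, hprod, rfl⟩
    obtain ⟨L, hL, hprod, hsum⟩ := Nat.sInf_mem hS
    calc tvdAffA n w = tvdAffA n ((L.map Prod.fst).prod) := by rw [hprod]
      _ ≤ 2 * (L.map Prod.snd).sum := AffineCostProof.tvd_prod_le L hL
      _ = 2 * costAffA n w := by rw [costAffA, ← hsum]
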